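/- arXiv:2507.13965 — 7 statements merged into one kernel-verified Lean document; each statement's English description precedes it below -/
import Mathlib

section
/- Let α₀, β_yx, α_v, α_z, α_u, γ₀, β_xy, γ_v, γ_w, γ_u, R_w, R_z be real numbers with β_xy*β_yx ≠ 1, and set ι = 1/(1 - β_xy*β_yx). Suppose real numbers X, Y, U, V, Z, W, ε_x, ε_y satisfy the extended structural equations X = α₀ + β_yx*Y + α_v*V + α_z*Z + γ_w*R_w*W + α_u*U + ε_x and Y = γ₀ + β_xy*X + γ_v*V + γ_w*W + α_z*R_z*Z + γ_u*U + ε_y. Then X = θ₀ + θ_z*Z + θ_w*W + θ_v*V + θ_u*U + ν_x and Y = μ₀ + μ_z*Z + μ_w*W + μ_v*V + μ_u*U + ν_y, where θ_z = α_z*(1 + R_z*β_yx)*ι, θ_w = γ_w*(R_w + β_yx)*ι, μ_z = α_z*(R_z + β_xy)*ι, μ_w = γ_w*(1 + R_w*β_xy)*ι, and all remaining coefficients θ₀, μ₀, θ_v, μ_v, θ_u, μ_u, ν_x, ν_y take the same form as in the reduced form of the model without sensitivity parameters: θ₀ = (α₀ + γ₀*β_yx)*ι, μ₀ = (γ₀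 + α₀*β_xy)*ι, θ_v = (α_v + γ_v*β_yx)*ι, μ_v = (γ_v + α_v*β_xy)*ι, θ_u = (α_u + γ_u*β_yx)*ι, μ_u = (γ_u + α_u*β_xy)*ι, ν_x = (ε_x + β_yx*ε_y)*ι, ν_y = (ε_y + β_xy*ε_x)*ι. -/
/-- Reduced form of the sensitivity-analysis extension of the bidirectional
proximal causal model, in which `W` directly affects `X` with coefficient
`γ_w R_w` and `Z` directly affects `Y` with coefficient `α_z R_z`. -/
theorem stmt_4 (α₀ βyx αv αz αu γ₀ βxy γv γw γu Rw Rz : ℝ)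
    (hne : βxy * βyx ≠ 1) (ι : ℝ) (hι : ι = 1 / (1 - βxy * βyx))
    (X Y U V Z W εx εy : ℝ)
    (hX : X = α₀ + βyx * Y + αv * V + αz * Z + γw * Rw * W + αu * U + εx)
    (hY : Y = γ₀ + βxy * X + γv * V + γw * W + αz * Rz * Z + γu * U + εy) :
    X = (α₀ + γ₀ * βyx) * ι + (αz * (1 + Rz * βyx) * ι) * Z
        + (γw * (Rw + βyx) * ι) * W + ((αv + γv * βyx) * ι) * V
        + ((αu + γu * βyx) * ι) * U + (εx + βyx * εy) * ι ∧
    Y = (γ₀ + α₀ * βxy) * ι + (αz * (Rz + βxy) * ι) * Z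
        + (γw * (1 + Rw * βxy) * ι) * W + ((γv + αv * βxy) * ι) * V
        + ((γu + αu * βxy) * ι) * U + (εy + βxy * εx) * ι := by
  have hden : 1 - βxy * βyx ≠ 0 := sub_ne_zero.mpr (Ne.symm hne)
  subst hι
  refine ⟨?_, ?_⟩ <;> field_simp
  · have hden' : 1 - βyx * βxy ≠ 0 := by rwa [mul_comm] at hden
    field_simp
    linear_combination hX + βyx * hY
  · linear_combination hY + βxy * hX
end

section
/- Let β, β', R_w, R_z be real numbers with 1 + R_z*β' ≠ 0 and 1 + R_w*β ≠ 0, and define S = (R_z + β)/(1 + R_z*β') and T = (R_w + β')/(1 + R_w*β). If 1 - S*T*R_w*R_z ≠ 0, then β = (S*(1 + T*R_z - R_w*R_z) - R_z)/(1 - S*T*R_w*R_z). -/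
/-- Sensitivity adjustment formula recovering `β^s_{x→y}` from the identified
coefficient ratios `S = S_{x→y}`, `T = S_{y→x}` and the sensitivity parameters
`R_w, R_z`. -/
theorem stmt_7 (β β' Rw Rz : ℝ) (h1 : 1 + Rz * β' ≠ 0) (h2 : 1 + Rw * β ≠ 0)
    (S T : ℝ) (hS : S = (Rz + β) / (1 + Rz * β'))
    (hT : T = (Rw + β') / (1 + Rw * β))
    (hden : 1 - S * T * Rw * Rz ≠ 0) :
    β = (S * (1 + T * Rz - Rw * Rz) - Rz) / (1 - S * T * Rw * Rz) := by
  have hS' : S * (1 + Rz * β') = Rz + β := by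
    rw [hS, div_mul_cancel₀ _ h1]
  have hT' : T * (1 + Rw * β) = Rw + β' := by
    rw [hT, div_mul_cancel₀ _ h2]
  rw [eq_div_iff hden]
  linear_combination -hS' - S * Rz * hT'
end

section
/- Let β, β', R_w, R_z be real numbers with 1 + R_z*β' ≠ 0 and 1 + R_w*β ≠ 0, and define S = (R_z + β)/(1 + R_z*β') and T = (R_w + β')/(1 + R_w*β). If 1 - S*T*R_w*R_z ≠ 0, then β' = (T*(1 + S*R_w - R_w*R_z) - R_w)/(1 - S*T*R_w*R_z). -/
/-- Sensitivity adjustment formula recovering `β^s_{y→x}` from the identified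
coefficient ratios `S = S_{x→y}`, `T = S_{y→x}` and the sensitivity parameters
`R_w, R_z`. -/
theorem stmt_8 (β β' Rw Rz : ℝ) (h1 : 1 + Rz * β' ≠ 0) (h2 : 1 + Rw * β ≠ 0)
    (S T : ℝ) (hS : S = (Rz + β) / (1 + Rz * β'))
    (hT : T = (Rw + β') / (1 + Rw * β))
    (hden : 1 - S * T * Rw * Rz ≠ 0) :
    β' = (T * (1 + S * Rw - Rw * Rz) - Rw) / (1 - S * T * Rw * Rz) := by
  have hS' : S * (1 + Rz * β') = Rz + β := by
    rw [hS, div_mul_cancel₀ _ h1]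
  have hT' : T * (1 + Rw * β) = Rw + β' := by
    rw [hT, div_mul_cancel₀ _ h2]
  rw [eq_div_iff hden]
  linear_combination -hT' - T * Rw * hS'
end

section
/- Let (Ω, F, P) be a probability space and m ≤ F a sub-σ-algebra. Let Z, V, W, U, X, ε_w, ν_x be real-valued integrable random variables with Z and V strongly m-measurable, and suppose: W = η₀ + η_u*U + η_v*V + ε_w with η_u ≠ 0 and E[ε_w | m] = 0 almost surely; X = θ₀ + θ_z*Z + θ_w*W + θ_v*V + θ_u*U + ν_x with E[ν_x | m] = 0 almost surely; and U, W, Z*1 (i.e., Z), V are such that all products appearing are integrable. Then, almost surely, E[X | m] = (θ₀ - θ_u*η₀/η_u) + θ_z*Z + (θ_v - θ_u*η_v/η_u)*V + (θ_w + θ_u/η_u)*E[W | m]. -/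
open MeasureTheory

/-- Conditional expectation identity underlying identification of `θ_z`:
given the proxy model `W = η₀ + η_u U + η_v V + ε_w` with `E[ε_w | m] = 0` and
the reduced-form equation `X = θ₀ + θ_z Z + θ_w W + θ_v V + θ_u U + ν_x` with
`E[ν_x | m] = 0`, where `m` is generated by the observed `(Z, V)`, the
conditional expectation `E[X | m]` is an affine combination of `1, Z, V` and
`E[W | m]` with `Z`-coefficient exactly `θ_z`. -/
theorem stmt_14 {Ω : Type*} {mΩ : MeasurableSpace Ω} (P : Measure Ω)
    [IsProbabilityMeasure P] (m : MeasurableSpace Ω) (hm : m ≤ mΩ)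
    (Z V W U X εw νx : Ω → ℝ)
    (hZmeas : StronglyMeasurable[m] Z) (hVmeas : StronglyMeasurable[m] V)
    (hZint : Integrable Z P) (hVint : Integrable V P) (hWint : Integrable W P)
    (hUint : Integrable U P) (hXint : Integrable X P)
    (hεwint : Integrable εw P) (hνxint : Integrable νx P)
    (η₀ ηu ηv θ₀ θz θw θv θu : ℝ) (hηu : ηu ≠ 0)
    (hW : ∀ ω, W ω = η₀ + ηu * U ω + ηv * V ω + εw ω)
    (hεw : P[εw|m] =ᵐ[P] 0)
    (hX : ∀ ω, X ω = θ₀ + θz * Z ω + θw * W ω + θv * V ω + θu * U ω + νx ω)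
    (hνx : P[νx|m] =ᵐ[P] 0) :
    P[X|m] =ᵐ[P] fun ω =>
      (θ₀ - θu * η₀ / ηu) + θz * Z ω + (θv - θu * ηv / ηu) * V ω
        + (θw + θu / ηu) * (P[W|m]) ω := by
  have hWeq : W = (fun _ => η₀) + (ηu • U) + (ηv • V) + εw := by
    funext ω; simp only [Pi.add_apply, Pi.smul_apply, smul_eq_mul, hW ω]
  have hXeq : X = (fun _ => θ₀) + (θz • Z) + (θw • W) + (θv • V) + (θu • U) + νx := by
    funext ω; simp only [Pi.add_apply, Pi.smul_apply, smul_eq_mul, hX ω]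
  have hV' : P[V|m] =ᵐ[P] V := by
    rw [condExp_of_stronglyMeasurable hm hVmeas hVint]
  have hZ' : P[Z|m] =ᵐ[P] Z := by
    rw [condExp_of_stronglyMeasurable hm hZmeas hZint]
  -- conditional expectation of W
  have hCW : P[W|m] =ᵐ[P] fun ω => η₀ + ηu * (P[U|m]) ω + ηv * V ω := by
    calc P[W|m] = P[(fun _ => η₀) + (ηu • U) + (ηv • V) + εw|m] := by rw [hWeq]
    _ =ᵐ[P] P[(fun _ => η₀) + (ηu • U) + (ηv • V)|m] + P[εw|m] :=
        condExp_add (m := m) (((integrable_const η₀).add (hUint.smul ηu)).add (hVint.smul ηv)) hεwint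
    _ =ᵐ[P] (P[(fun _ => η₀) + (ηu • U)|m] + P[ηv • V|m]) + P[εw|m] :=
        ((condExp_add (m := m) ((integrable_const η₀).add (hUint.smul ηu)) (hVint.smul ηv)).add
          Filter.EventuallyEq.rfl)
    _ =ᵐ[P] ((P[(fun _ => η₀ : Ω → ℝ)|m] + P[ηu • U|m]) + P[ηv • V|m]) + P[εw|m] :=
        (((condExp_add (m := m) (integrable_const η₀) (hUint.smul ηu)).add Filter.EventuallyEq.rfl).add
          Filter.EventuallyEq.rfl)
    _ =ᵐ[P] fun ω => η₀ + ηu * (P[U|m]) ω + ηv * V ω := by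
        filter_upwards [condExp_smul (μ := P) (m := m) ηu U,
          condExp_smul (μ := P) (m := m) ηv V, hV', hεw] with ω h1 h2 h3 h4
        simp only [Pi.add_apply, h1, h2, Pi.smul_apply, smul_eq_mul, h4, Pi.zero_apply,
          condExp_const hm]
        rw [show (P[V|m]) ω = V ω from h3]
        ring
  -- conditional expectation of X
  have hCX : P[X|m] =ᵐ[P] fun ω =>
      θ₀ + θz * Z ω + θw * (P[W|m]) ω + θv * V ω + θu * (P[U|m]) ω := by
    calc P[X|m] = P[(fun _ => θ₀) + (θz • Z) + (θw • W) + (θv • V) + (θu • U) + νx|m] := by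
          rw [hXeq]
    _ =ᵐ[P] P[(fun _ => θ₀) + (θz • Z) + (θw • W) + (θv • V) + (θu • U)|m] + P[νx|m] :=
        condExp_add (m := m) (((((integrable_const θ₀).add (hZint.smul θz)).add (hWint.smul θw)).add
          (hVint.smul θv)).add (hUint.smul θu)) hνxint
    _ =ᵐ[P] (P[(fun _ => θ₀) + (θz • Z) + (θw • W) + (θv • V)|m] + P[θu • U|m]) + P[νx|m] :=
        ((condExp_add (m := m) ((((integrable_const θ₀).add (hZint.smul θz)).add (hWint.smul θw)).add
          (hVint.smul θv)) (hUint.smul θu)).add Filter.EventuallyEq.rfl)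
    _ =ᵐ[P] ((P[(fun _ => θ₀) + (θz • Z) + (θw • W)|m] + P[θv • V|m]) + P[θu • U|m]) + P[νx|m] :=
        (((condExp_add (m := m) (((integrable_const θ₀).add (hZint.smul θz)).add (hWint.smul θw))
          (hVint.smul θv)).add Filter.EventuallyEq.rfl).add Filter.EventuallyEq.rfl)
    _ =ᵐ[P] (((P[(fun _ => θ₀) + (θz • Z)|m] + P[θw • W|m]) + P[θv • V|m]) + P[θu • U|m])
          + P[νx|m] :=
        ((((condExp_add (m := m) ((integrable_const θ₀).add (hZint.smul θz)) (hWint.smul θw)).add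
          Filter.EventuallyEq.rfl).add Filter.EventuallyEq.rfl).add Filter.EventuallyEq.rfl)
    _ =ᵐ[P] ((((P[(fun _ => θ₀ : Ω → ℝ)|m] + P[θz • Z|m]) + P[θw • W|m]) + P[θv • V|m])
          + P[θu • U|m]) + P[νx|m] :=
        (((((condExp_add (m := m) (integrable_const θ₀) (hZint.smul θz)).add Filter.EventuallyEq.rfl).add
          Filter.EventuallyEq.rfl).add Filter.EventuallyEq.rfl).add Filter.EventuallyEq.rfl)
    _ =ᵐ[P] fun ω => θ₀ + θz * Z ω + θw * (P[W|m]) ω + θv * V ω + θu * (P[U|m]) ω := by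
        filter_upwards [condExp_smul (μ := P) (m := m) θz Z,
          condExp_smul (μ := P) (m := m) θw W, condExp_smul (μ := P) (m := m) θv V,
          condExp_smul (μ := P) (m := m) θu U, hV', hZ', hνx] with ω h1 h2 h3 h4 h5 h6 h7
        simp only [Pi.add_apply, h1, h2, h3, h4, Pi.smul_apply, smul_eq_mul, h7,
          Pi.zero_apply, condExp_const hm]
        rw [show (P[V|m]) ω = V ω from h5, show (P[Z|m]) ω = Z ω from h6]
        ring
  filter_upwards [hCX, hCW] with ω h1 h2
  rw [h1, h2]
  field_simp
  ring
end

section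
/- Let (Ω, F, P) be a probability space and m ≤ F a sub-σ-algebra. Let Z, V, W, U, Y, ε_w, ν_y be real-valued integrable random variables with Z and V strongly m-measurable, and suppose: W = η₀ + η_u*U + η_v*V + ε_w with η_u ≠ 0 and E[ε_w | m] = 0 almost surely; Y = μ₀ + μ_z*Z + μ_w*W + μ_v*V + μ_u*U + ν_y with E[ν_y | m] = 0 almost surely; and all appearing random variables are integrable. Then, almost surely, E[Y | m] = (μ₀ - μ_u*η₀/η_u) + μ_z*Z + (μ_v - μ_u*η_v/η_u)*V + (μ_w + μ_u/η_u)*E[W | m]. -/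
open MeasureTheory

/-- Conditional expectation identity underlying identification of `μ_z`:
given the proxy model `W = η₀ + η_u U + η_v V + ε_w` with `E[ε_w | m] = 0` and
the reduced-form equation `Y = μ₀ + μ_z Z + μ_w W + μ_v V + μ_u U + ν_y` with
`E[ν_y | m] = 0`, where `m` is generated by the observed `(Z, V)`, the
conditional expectation `E[Y | m]` is an affine combination of `1, Z, V` and
`E[W | m]` with `Z`-coefficient exactly `μ_z`. -/
theorem stmt_15 {Ω : Type*} {mΩ : MeasurableSpace Ω} (P : Measure Ω)
    [IsProbabilityMeasure P] (m : MeasurableSpace Ω) (hm : m ≤ mΩ)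
    (Z V W U Y εw νy : Ω → ℝ)
    (hZmeas : StronglyMeasurable[m] Z) (hVmeas : StronglyMeasurable[m] V)
    (hZint : Integrable Z P) (hVint : Integrable V P) (hWint : Integrable W P)
    (hUint : Integrable U P) (hYint : Integrable Y P)
    (hεwint : Integrable εw P) (hνyint : Integrable νy P)
    (η₀ ηu ηv μ₀ μz μw μv μu : ℝ) (hηu : ηu ≠ 0)
    (hW : ∀ ω, W ω = η₀ + ηu * U ω + ηv * V ω + εw ω)
    (hεw : P[εw|m] =ᵐ[P] 0)
    (hY : ∀ ω, Y ω = μ₀ + μz * Z ω + μw * W ω + μv * V ω + μu * U ω + νy ω)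
    (hνy : P[νy|m] =ᵐ[P] 0) :
    P[Y|m] =ᵐ[P] fun ω =>
      (μ₀ - μu * η₀ / ηu) + μz * Z ω + (μv - μu * ηv / ηu) * V ω
        + (μw + μu / ηu) * (P[W|m]) ω := by
  set c₀ := μ₀ - μu * η₀ / ηu with hc₀
  set cv := μv - μu * ηv / ηu with hcv
  set cw := μw + μu / ηu with hcw
  set ce := -(μu / ηu) with hce
  have hYrep : Y = (fun _ => c₀) + (μz • Z + (cv • V + (cw • W + (ce • εw + νy)))) := by
    funext ω
    simp only [Pi.add_apply, Pi.smul_apply, smul_eq_mul, hc₀, hcv, hcw, hce]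
    rw [hY ω, hW ω]
    field_simp
    ring
  have h1 : Integrable (μz • Z) P := hZint.smul μz
  have h2 : Integrable (cv • V) P := hVint.smul cv
  have h3 : Integrable (cw • W) P := hWint.smul cw
  have h4 : Integrable (ce • εw) P := hεwint.smul ce
  have key : P[Y|m] =ᵐ[P]
      (fun _ => c₀) + (μz • Z + (cv • V + (cw • P[W|m] + (0 : Ω → ℝ)))) := by
    rw [hYrep]
    refine (condExp_add (integrable_const c₀) ((h1.add (h2.add (h3.add (h4.add hνyint))))) m).trans ?_
    refine Filter.EventuallyEq.add (Filter.EventuallyEq.of_eq (condExp_const hm c₀)) ?_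
    refine (condExp_add h1 (h2.add (h3.add (h4.add hνyint))) m).trans ?_
    refine Filter.EventuallyEq.add ?_ ?_
    · exact (condExp_smul μz Z m).trans
        (by rw [condExp_of_stronglyMeasurable hm hZmeas hZint])
    refine (condExp_add h2 (h3.add (h4.add hνyint)) m).trans ?_
    refine Filter.EventuallyEq.add ?_ ?_
    · exact (condExp_smul cv V m).trans
        (by rw [condExp_of_stronglyMeasurable hm hVmeas hVint])
    refine (condExp_add h3 (h4.add hνyint) m).trans ?_
    refine Filter.EventuallyEq.add (condExp_smul cw W m) ?_
    refine (condExp_add h4 hνyint m).trans ?_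
    have he : P[ce • εw|m] =ᵐ[P] 0 := by
      refine (condExp_smul ce εw m).trans ?_
      filter_upwards [hεw] with ω hω
      simp [hω]
    filter_upwards [he, hνy] with ω hω1 hω2
    simp [hω1, hω2]
  refine key.trans ?_
  filter_upwards with ω
  simp only [Pi.add_apply, Pi.smul_apply, smul_eq_mul, Pi.zero_apply, add_zero]
  ring
end

section
/- Let (Ω, F, P) be a probability space and m ≤ F a sub-σ-algebra. Let Z, V, W, U, X, Y, ε_w, ν_x, ν_y be real-valued integrable random variables with Z and V strongly m-measurable. Suppose β_xy, β_yx, α_z are reals with β_xy*β_yx ≠ 1, ι = 1/(1 - β_xy*β_yx), and: W = η₀ + η_u*U + η_v*V + ε_w with η_u ≠ 0 and E[ε_w | m] = 0 a.s.; X = θ₀ + α_z*ι*Z + θ_w*W + θ_v*V + θ_u*U + ν_x with E[ν_x | m] = 0 a.s.; Y = μ₀ + α_z*β_xy*ι*Z + μ_w*W + μ_v*V + μ_u*U + ν_y with E[ν_y | m] = 0 a.s.; and all appearing random variables are integrable. Then there exist real constants d₀, d_v, d_w such that, almost surely, E[Y | m] - β_xy*E[X | m] = d₀ + d_v*V + d_w*E[W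 | m]; that is, the Z-coefficient of E[Y | m] - β_xy*E[X | m] vanishes. -/
open MeasureTheory

/-- Identification mechanism for `β_{x→y}` in Theorem 1: since the reduced-form
`Z`-coefficients satisfy `μ_z = β_{x→y} θ_z` with `θ_z = α_z ι` and
`μ_z = α_z β_{x→y} ι`, subtracting `β_{x→y} E[X | m]` from `E[Y | m]`
eliminates the `Z` term: the difference is an affine combination of `1, V` and
`E[W | m]` only. -/
theorem stmt_16 {Ω : Type*} {mΩ : MeasurableSpace Ω} (P : Measure Ω)
    [IsProbabilityMeasure P] (m : MeasurableSpace Ω) (hm : m ≤ mΩ)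
    (Z V W U X Y εw νx νy : Ω → ℝ)
    (hZmeas : StronglyMeasurable[m] Z) (hVmeas : StronglyMeasurable[m] V)
    (hZint : Integrable Z P) (hVint : Integrable V P) (hWint : Integrable W P)
    (hUint : Integrable U P) (hXint : Integrable X P) (hYint : Integrable Y P)
    (hεwint : Integrable εw P) (hνxint : Integrable νx P)
    (hνyint : Integrable νy P)
    (βxy βyx αz : ℝ) (hne : βxy * βyx ≠ 1) (ι : ℝ)
    (hι : ι = 1 / (1 - βxy * βyx))
    (η₀ ηu ηv θ₀ θw θv θu μ₀ μw μv μu : ℝ) (hηu : ηu ≠ 0)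
    (hW : ∀ ω, W ω = η₀ + ηu * U ω + ηv * V ω + εw ω)
    (hεw : P[εw|m] =ᵐ[P] 0)
    (hX : ∀ ω, X ω = θ₀ + αz * ι * Z ω + θw * W ω + θv * V ω + θu * U ω + νx ω)
    (hνx : P[νx|m] =ᵐ[P] 0)
    (hY : ∀ ω, Y ω = μ₀ + αz * βxy * ι * Z ω + μw * W ω + μv * V ω
      + μu * U ω + νy ω)
    (hνy : P[νy|m] =ᵐ[P] 0) :
    ∃ d₀ dv dw : ℝ,
      (fun ω => (P[Y|m]) ω - βxy * (P[X|m]) ω) =ᵐ[P]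
        fun ω => d₀ + dv * V ω + dw * (P[W|m]) ω := by
  set k : ℝ := (μu - βxy * θu) / ηu with hk
  refine ⟨μ₀ - βxy * θ₀ - k * η₀, μv - βxy * θv - k * ηv, μw - βxy * θw + k, ?_⟩
  have hVi : Integrable (fun ω => (μv - βxy * θv - k * ηv) * V ω) P := hVint.const_mul _
  have hWi : Integrable (fun ω => (μw - βxy * θw + k) * W ω) P := hWint.const_mul _
  have hεi : Integrable (fun ω => (-k) * εw ω) P := hεwint.const_mul _
  have hνxi : Integrable (fun ω => (-βxy) * νx ω) P := hνxint.const_mul _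
  have key : (Y - βxy • X) =
      (fun _ : Ω => μ₀ - βxy * θ₀ - k * η₀) + ((fun ω => (μv - βxy * θv - k * ηv) * V ω)
        + ((fun ω => (μw - βxy * θw + k) * W ω)
        + ((fun ω => (-k) * εw ω) + (νy + fun ω => (-βxy) * νx ω)))) := by
    funext ω
    simp only [Pi.add_apply, Pi.sub_apply, Pi.smul_apply, smul_eq_mul, hY, hX, hW, hk]
    field_simp
    ring
  have hsub : P[Y - βxy • X|m] =ᵐ[P] P[Y|m] - βxy • P[X|m] := by
    refine (condExp_sub (m := m) hYint (hXint.smul βxy)).trans ?_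
    filter_upwards [condExp_smul (μ := P) (m := m) βxy X] with ω h
    simp [h]
  have hrhs : P[Y - βxy • X|m] =ᵐ[P]
      fun ω => (μ₀ - βxy * θ₀ - k * η₀) + ((μv - βxy * θv - k * ηv) * V ω
        + ((μw - βxy * θw + k) * (P[W|m]) ω)) := by
    rw [key]
    have h1 := condExp_add (μ := P) (m := m) (integrable_const (μ₀ - βxy * θ₀ - k * η₀))
      (hVi.add (hWi.add (hεi.add (hνyint.add hνxi))))
    have h2 := condExp_add (μ := P) (m := m) hVi (hWi.add (hεi.add (hνyint.add hνxi)))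
    have h3 := condExp_add (μ := P) (m := m) hWi (hεi.add (hνyint.add hνxi))
    have h4 := condExp_add (μ := P) (m := m) hεi (hνyint.add hνxi)
    have h5 := condExp_add (μ := P) (m := m) hνyint hνxi
    have hc : P[(fun _ : Ω => μ₀ - βxy * θ₀ - k * η₀)|m]
        = fun _ : Ω => μ₀ - βxy * θ₀ - k * η₀ := condExp_const hm _
    have hV : P[(fun ω => (μv - βxy * θv - k * ηv) * V ω)|m]
        = fun ω => (μv - βxy * θv - k * ηv) * V ω :=
      condExp_of_stronglyMeasurable hm
        ((hVmeas.const_mul (μv - βxy * θv - k * ηv))) hVi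
    have hWc : P[(fun ω => (μw - βxy * θw + k) * W ω)|m]
        =ᵐ[P] fun ω => (μw - βxy * θw + k) * (P[W|m]) ω := by
      have := condExp_smul (μ := P) (m := m) (μw - βxy * θw + k) W
      rw [show (fun ω => (μw - βxy * θw + k) * W ω) = (μw - βxy * θw + k) • W from rfl]
      filter_upwards [this] with ω h
      simpa using h
    have hε : P[(fun ω => (-k) * εw ω)|m] =ᵐ[P] fun _ => (0 : ℝ) := by
      rw [show (fun ω => (-k) * εw ω) = (-k) • εw from rfl]
      filter_upwards [condExp_smul (μ := P) (m := m) (-k) εw, hεw] with ω h h'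
      simp only [Pi.smul_apply, smul_eq_mul] at h
      rw [h, h']
      simp
    have hνx' : P[(fun ω => (-βxy) * νx ω)|m] =ᵐ[P] fun _ => (0 : ℝ) := by
      rw [show (fun ω => (-βxy) * νx ω) = (-βxy) • νx from rfl]
      filter_upwards [condExp_smul (μ := P) (m := m) (-βxy) νx, hνx] with ω h h'
      simp only [Pi.smul_apply, smul_eq_mul] at h
      rw [h, h']
      simp
    filter_upwards [h1, h2, h3, h4, h5, hWc, hε, hνx', hνy] with ω e1 e2 e3 e4 e5 eW eε eνx eνy
    simp only [Pi.add_apply] at e1 e2 e3 e4 e5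
    rw [e1, e2, e3, e4, e5, hc, hV, eW, eε, eνx, eνy]
    simp
  filter_upwards [hsub, hrhs] with ω h1 h2
  have : (P[Y|m]) ω - βxy * (P[X|m]) ω = (P[Y - βxy • X|m]) ω := by
    rw [h1]; simp
  rw [this, h2]
  ring
end

section
/- Let (Ω, F, P) be a probability space and m ≤ F a sub-σ-algebra. Let Z, V, W, U, X, Y, ε_z, ν_x, ν_y be real-valued integrable random variables with W and V strongly m-measurable. Suppose β_xy, β_yx, γ_w are reals with β_xy*β_yx ≠ 1, ι = 1/(1 - β_xy*β_yx), and: Z = δ₀ + δ_u*U + δ_v*V + ε_z with δ_u ≠ 0 and E[ε_z | m] = 0 a.s.; X = θ₀ + θ_z*Z + γ_w*β_yx*ι*W + θ_v*V + θ_u*U + ν_x with E[ν_x | m] = 0 a.s.; Y = μ₀ + μ_z*Z + γ_w*ι*W + μ_v*V + μ_u*U + ν_y with E[ν_y | m] = 0 a.s.; and all appearing random variables are integrable. Then there exist real constants d₀, d_v, d_z such that, almost surely, E[X | m] - β_yx*E[Y | m] = d₀ + d_v*V + d_z*E[Z | m]; that is, the W-coefficient of E[X | m] - β_yx*E[Y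 | m] vanishes. -/
open MeasureTheory

lemma condexp_affine_aux {Ω : Type*} {mΩ : MeasurableSpace Ω} (P : Measure Ω)
    [IsProbabilityMeasure P] (m : MeasurableSpace Ω) (hm : m ≤ mΩ)
    (Z V W ε ν f : Ω → ℝ)
    (hWmeas : StronglyMeasurable[m] W) (hVmeas : StronglyMeasurable[m] V)
    (hZint : Integrable Z P) (hVint : Integrable V P) (hWint : Integrable W P)
    (hεint : Integrable ε P) (hνint : Integrable ν P)
    (hε : P[ε|m] =ᵐ[P] 0) (hν : P[ν|m] =ᵐ[P] 0)
    (c₀ a b c e : ℝ)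
    (hf : ∀ ω, f ω = c₀ + a * Z ω + b * W ω + c * V ω + e * ε ω + ν ω) :
    P[f|m] =ᵐ[P] fun ω => c₀ + a * (P[Z|m]) ω + b * W ω + c * V ω := by
  have hfe : f = (fun ω => c₀ + a * Z ω + b * W ω + c * V ω + e * ε ω) + ν := by
    funext ω; simpa using hf ω
  have h1 : Integrable (fun ω => c₀ + a * Z ω + b * W ω + c * V ω) P := by
    exact (((integrable_const c₀).add (hZint.const_mul a)).add
      (hWint.const_mul b)).add (hVint.const_mul c)
  have h2 : Integrable (fun ω => c₀ + a * Z ω + b * W ω + c * V ω + e * ε ω) P :=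
    h1.add (hεint.const_mul e)
  rw [hfe]
  calc P[(fun ω => c₀ + a * Z ω + b * W ω + c * V ω + e * ε ω) + ν|m]
      =ᵐ[P] P[fun ω => c₀ + a * Z ω + b * W ω + c * V ω + e * ε ω|m] + P[ν|m] :=
        condExp_add h2 hνint m
    _ =ᵐ[P] P[fun ω => c₀ + a * Z ω + b * W ω + c * V ω + e * ε ω|m] + 0 :=
        Filter.EventuallyEq.add Filter.EventuallyEq.rfl hν
    _ =ᵐ[P] P[(fun ω => c₀ + a * Z ω + b * W ω + c * V ω) + e • ε|m] + 0 := by rfl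
    _ =ᵐ[P] (P[fun ω => c₀ + a * Z ω + b * W ω + c * V ω|m]
        + P[e • ε|m]) + 0 :=
        Filter.EventuallyEq.add (condExp_add h1 (hεint.smul e) m) Filter.EventuallyEq.rfl
    _ =ᵐ[P] (P[fun ω => c₀ + a * Z ω + b * W ω + c * V ω|m] + e • (0 : Ω → ℝ)) + 0 := by
        refine Filter.EventuallyEq.add (Filter.EventuallyEq.add Filter.EventuallyEq.rfl
          ?_) Filter.EventuallyEq.rfl
        exact (condExp_smul e ε m).trans (hε.fun_comp fun x => e • x)
    _ =ᵐ[P] P[fun ω => c₀ + a * Z ω + b * W ω + c * V ω|m] := by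
        simp
    _ =ᵐ[P] fun ω => c₀ + a * (P[Z|m]) ω + b * W ω + c * V ω := by
      have e1 : (fun ω => c₀ + a * Z ω + b * W ω + c * V ω)
          = ((fun _ => c₀) + a • Z) + (b • W + c • V) := by
        funext ω; simp [smul_eq_mul]; ring
      rw [e1]
      calc P[((fun _ => c₀) + a • Z) + (b • W + c • V)|m]
          =ᵐ[P] P[(fun _ => c₀) + a • Z|m] + P[b • W + c • V|m] :=
            condExp_add ((integrable_const c₀).add (hZint.smul a))
              ((hWint.smul b).add (hVint.smul c)) m
        _ =ᵐ[P] (P[(fun _ => c₀ : Ω → ℝ)|m] + P[a • Z|m]) + P[b • W + c • V|m] :=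
            Filter.EventuallyEq.add (condExp_add (integrable_const c₀) (hZint.smul a) m)
              Filter.EventuallyEq.rfl
        _ =ᵐ[P] fun ω => c₀ + a * (P[Z|m]) ω + b * W ω + c * V ω := by
            have hWV : P[b • W + c • V|m] = b • W + c • V :=
              condExp_of_stronglyMeasurable hm
                ((hWmeas.const_smul b).add (hVmeas.const_smul c))
                ((hWint.smul b).add (hVint.smul c))
            rw [hWV, condExp_const hm]
            filter_upwards [condExp_smul (m := m) (μ := P) a Z] with ω hω
            simp only [Pi.add_apply, hω, Pi.smul_apply, smul_eq_mul]
            ring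

/-- Identification mechanism for `β_{y→x}` in Theorem 1: since the reduced-form
`W`-coefficients satisfy `θ_w = β_{y→x} μ_w` with `θ_w = γ_w β_{y→x} ι` and
`μ_w = γ_w ι`, subtracting `β_{y→x} E[Y | m]` from `E[X | m]` eliminates the
`W` term: the difference is an affine combination of `1, V` and `E[Z | m]`
only. -/
theorem stmt_17 {Ω : Type*} {mΩ : MeasurableSpace Ω} (P : Measure Ω)
    [IsProbabilityMeasure P] (m : MeasurableSpace Ω) (hm : m ≤ mΩ)
    (Z V W U X Y εz νx νy : Ω → ℝ)
    (hWmeas : StronglyMeasurable[m] W) (hVmeas : StronglyMeasurable[m] V)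
    (hZint : Integrable Z P) (hVint : Integrable V P) (hWint : Integrable W P)
    (hUint : Integrable U P) (hXint : Integrable X P) (hYint : Integrable Y P)
    (hεzint : Integrable εz P) (hνxint : Integrable νx P)
    (hνyint : Integrable νy P)
    (βxy βyx γw : ℝ) (hne : βxy * βyx ≠ 1) (ι : ℝ)
    (hι : ι = 1 / (1 - βxy * βyx))
    (δ₀ δu δv θ₀ θz θv θu μ₀ μz μv μu : ℝ) (hδu : δu ≠ 0)
    (hZ : ∀ ω, Z ω = δ₀ + δu * U ω + δv * V ω + εz ω)
    (hεz : P[εz|m] =ᵐ[P] 0)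
    (hX : ∀ ω, X ω = θ₀ + θz * Z ω + γw * βyx * ι * W ω + θv * V ω
      + θu * U ω + νx ω)
    (hνx : P[νx|m] =ᵐ[P] 0)
    (hY : ∀ ω, Y ω = μ₀ + μz * Z ω + γw * ι * W ω + μv * V ω + μu * U ω + νy ω)
    (hνy : P[νy|m] =ᵐ[P] 0) :
    ∃ d₀ dv dz : ℝ,
      (fun ω => (P[X|m]) ω - βyx * (P[Y|m]) ω) =ᵐ[P]
        fun ω => d₀ + dv * V ω + dz * (P[Z|m]) ω := by
  -- From hZ, U ω = (Z ω - δ₀ - δv * V ω - εz ω) / δu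
  have hU : ∀ ω, U ω = (Z ω - δ₀ - δv * V ω - εz ω) / δu := by
    intro ω
    have := hZ ω
    field_simp
    linarith
  have hXc : P[X|m] =ᵐ[P] fun ω => (θ₀ - θu * δ₀ / δu)
      + (θz + θu / δu) * (P[Z|m]) ω + (γw * βyx * ι) * W ω
      + (θv - θu * δv / δu) * V ω :=
    condexp_affine_aux P m hm Z V W εz νx X hWmeas hVmeas hZint hVint hWint
      hεzint hνxint hεz hνx (θ₀ - θu * δ₀ / δu) (θz + θu / δu) (γw * βyx * ι)
      (θv - θu * δv / δu) (-(θu / δu)) (by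
        intro ω; rw [hX ω, hU ω]; field_simp; ring)
  have hYc : P[Y|m] =ᵐ[P] fun ω => (μ₀ - μu * δ₀ / δu)
      + (μz + μu / δu) * (P[Z|m]) ω + (γw * ι) * W ω
      + (μv - μu * δv / δu) * V ω :=
    condexp_affine_aux P m hm Z V W εz νy Y hWmeas hVmeas hZint hVint hWint
      hεzint hνyint hεz hνy (μ₀ - μu * δ₀ / δu) (μz + μu / δu) (γw * ι)
      (μv - μu * δv / δu) (-(μu / δu)) (by
        intro ω; rw [hY ω, hU ω]; field_simp; ring)
  refine ⟨(θ₀ - θu * δ₀ / δu) - βyx * (μ₀ - μu * δ₀ / δu),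
    (θv - θu * δv / δu) - βyx * (μv - μu * δv / δu),
    (θz + θu / δu) - βyx * (μz + μu / δu), ?_⟩
  filter_upwards [hXc, hYc] with ω hx hy
  rw [hx, hy]
  ring
end
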